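/- Let $\Gamma$ be a star-shaped tree with central vertex weighted $e - \sum_{i=1}^n \lfloor r_i \rfloor$ (an integer) and $n$ legs, where the $i$-th leg has vertices weighted $a_{i1}, \ldots, a_{ik_i}$ with all $a_{ij} \leq -2$ obtained from the negative continued fraction expansion of $-1/r_i$ for $r_i \in (0,1) \cap \mathbb{Q}$. If the associated symmetric bilinear form (intersection form of the plumbing) has determinant zero, then it is negative semi-definite. -/

import Mathlib

/-- The negative continued fraction `[a₁, …, aₙ] = a₁ - 1/[a₂, …, aₙ]`. -/
noncomputable def negCF : ℤ → List ℤ → ℚ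
  | a, [] => (a : ℚ)
  | a, b :: l => (a : ℚ) - 1 / negCF b l

lemma negCF_lt_neg_one : ∀ (l : List ℤ) (a : ℤ), a ≤ -2 → (∀ b ∈ l, b ≤ -2) →
    negCF a l < -1
  | [], a, ha, _ => by
      show (a : ℚ) < -1
      exact_mod_cast (by omega : a < -1)
  | b :: l, a, ha, hl => by
      have hb := negCF_lt_neg_one l b (hl b (by simp)) (fun c hc => hl c (by simp [hc]))
      show (a : ℚ) - 1 / negCF b l < -1
      have hbne : negCF b l ≠ 0 := by linarith
      have h1 : negCF b l * (1 / negCF b l) = 1 := mul_one_div_cancel hbne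
      have ha' : (a : ℚ) ≤ -2 := by exact_mod_cast ha
      nlinarith [h1, hb]

noncomputable def chainF : ℚ → List ℤ → List ℚ → ℚ
  | _, _, [] => 0
  | _, [], _ => 0
  | x0, a :: l, y :: ys => (a : ℚ) * y ^ 2 + 2 * x0 * y + chainF y l ys

@[simp] lemma chainF_nil_ys (x0 : ℚ) (l : List ℤ) : chainF x0 l [] = 0 := by
  cases l <;> rfl

@[simp] lemma chainF_nil (x0 : ℚ) (ys : List ℚ) : chainF x0 [] ys = 0 := by
  cases ys <;> rfl

lemma chainF_cons (x0 : ℚ) (a : ℤ) (l : List ℤ) (y : ℚ) (ys : List ℚ) :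
    chainF x0 (a :: l) (y :: ys) = (a : ℚ) * y ^ 2 + 2 * x0 * y + chainF y l ys := rfl

lemma complete_sq (c x0 y : ℚ) (hc : c < 0) : c * y ^ 2 + 2 * x0 * y ≤ -x0 ^ 2 / c := by
  have h1 : (c * y + x0) ^ 2 / c ≤ 0 :=
    div_nonpos_of_nonneg_of_nonpos (sq_nonneg _) hc.le
  have h2 : (c * y + x0) ^ 2 / c = c * y ^ 2 + 2 * x0 * y + x0 ^ 2 / c := by
    field_simp [hc.ne]; ring
  have h3 : -x0 ^ 2 / c = -(x0 ^ 2 / c) := by ring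
  linarith [h2 ▸ h1]

lemma chainF_le : ∀ (l : List ℤ) (a : ℤ), a ≤ -2 → (∀ b ∈ l, b ≤ -2) →
    ∀ (x0 : ℚ) (ys : List ℚ), chainF x0 (a :: l) ys ≤ -x0 ^ 2 / negCF a l := by
  intro l
  induction l with
  | nil =>
    intro a ha _ x0 ys
    have ha' : (a : ℚ) < 0 := by exact_mod_cast (by omega : a < (0:ℤ))
    cases ys with
    | nil =>
      rw [chainF_nil_ys]
      have : negCF a [] = (a : ℚ) := rfl
      rw [this]
      exact div_nonneg_of_nonpos (neg_nonpos.mpr (sq_nonneg x0)) ha'.le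
    | cons y ys' =>
      rw [chainF_cons]
      simp only [chainF_nil]
      have : negCF a [] = (a : ℚ) := rfl
      rw [this]
      have := complete_sq (a : ℚ) x0 y ha'
      linarith
  | cons b l' ih =>
    intro a ha hl x0 ys
    have hc : negCF a (b :: l') < -1 := negCF_lt_neg_one _ _ ha hl
    have hc0 : negCF a (b :: l') < 0 := by linarith
    cases ys with
    | nil =>
      rw [chainF_nil_ys]
      exact div_nonneg_of_nonpos (neg_nonpos.mpr (sq_nonneg x0)) hc0.le
    | cons y ys' =>
      rw [chainF_cons]
      have hb : b ≤ -2 := hl b (by simp)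
      have hl' : ∀ c ∈ l', c ≤ -2 := fun c hc => hl c (by simp [hc])
      have ihy := ih b hb hl' y ys'
      have hcb : negCF b l' < -1 := negCF_lt_neg_one _ _ hb hl'
      have hcbne : negCF b l' ≠ 0 := by linarith
      have hdef : negCF a (b :: l') = (a : ℚ) - 1 / negCF b l' := rfl
      have hcs := complete_sq (negCF a (b :: l')) x0 y hc0
      rw [hdef] at hcs
      have h4 : -y ^ 2 / negCF b l' = -(1 / negCF b l') * y ^ 2 := by field_simp
      have h5 : ((a:ℚ) - 1 / negCF b l') * y ^ 2 = (a:ℚ) * y ^ 2 - (1 / negCF b l') * y ^ 2 := by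
        ring
      rw [hdef]
      linarith

lemma ofFn_nat_cons {α : Type*} (m : ℕ) (hm : 0 < m) (f : ℕ → α) :
    (List.ofFn fun j : Fin m => f j) = f 0 :: List.ofFn fun j : Fin (m - 1) => f (j + 1) := by
  obtain ⟨m', rfl⟩ : ∃ m', m = m' + 1 := ⟨m - 1, by omega⟩
  rw [List.ofFn_succ]
  simp [Fin.val_succ]

lemma ofFn_nat_congr {α : Type*} (m m' : ℕ) (h : m = m') (f g : ℕ → α)
    (hfg : ∀ j < m, f j = g j) :
    (List.ofFn fun j : Fin m => f j) = List.ofFn fun j : Fin m' => g j := by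
  subst h
  congr 1
  funext j
  exact hfg j j.isLt

lemma fin_sum_ite (m : ℕ) (c : ℕ) (C : ℚ) :
    (∑ j : Fin m, if (j : ℕ) = c then C else 0) = if c < m then C else 0 := by
  rw [Fin.sum_univ_eq_sum_range (fun t => if t = c then C else 0) m]
  rw [Finset.sum_ite_eq' (Finset.range m) c (fun _ => C)]
  simp [Finset.mem_range]

lemma sum_shift (m : ℕ) (g : ℕ → ℚ) (hg : g m = 0) :
    ∑ j ∈ Finset.range m, g j * g (j + 1) =
      ∑ j ∈ Finset.range m, (if j = 0 then 0 else g (j - 1)) * g j := by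
  cases m with
  | zero => simp
  | succ m =>
    rw [Finset.sum_range_succ, Finset.sum_range_succ'
      (fun j => (if j = 0 then 0 else g (j - 1)) * g j)]
    simp only [hg, mul_zero, add_zero, if_pos rfl, zero_mul, if_true]
    refine Finset.sum_congr rfl fun j _ => ?_
    simp [Nat.add_sub_cancel]

lemma chainF_formula : ∀ (m : ℕ) (f : ℕ → ℤ) (g : ℕ → ℚ) (x0 : ℚ),
    chainF x0 (List.ofFn fun j : Fin m => f j) (List.ofFn fun j : Fin m => g j) =
      ∑ j ∈ Finset.range m,
        ((f j : ℚ) * g j ^ 2 + 2 * (if j = 0 then x0 else g (j - 1)) * g j) := by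
  intro m
  induction m with
  | zero => simp
  | succ m ih =>
    intro f g x0
    rw [List.ofFn_succ, List.ofFn_succ]
    simp only [Fin.val_succ, Fin.val_zero, chainF_cons]
    rw [ih (fun t => f (t + 1)) (fun t => g (t + 1)) (g 0)]
    rw [Finset.sum_range_succ'
      (fun j => (f j : ℚ) * g j ^ 2 + 2 * (if j = 0 then x0 else g (j - 1)) * g j)]
    simp only [if_pos rfl, Nat.add_sub_cancel, if_true]
    have : ∀ j ∈ Finset.range m,
        ((f (j+1) : ℚ) * g (j+1) ^ 2 + 2 * (if j = 0 then g 0 else g (j - 1 + 1)) * g (j+1))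
        = ((f (j+1) : ℚ) * g (j+1) ^ 2 + 2 * (if j + 1 = 0 then x0 else g j) * g (j+1)) := by
      intro j _
      by_cases h : j = 0
      · simp [h]
      · have : j - 1 + 1 = j := by omega
        simp [h, this]
    rw [Finset.sum_congr rfl this]
    ring

section Star

variable {n : ℕ} (k : Fin n → ℕ) (a : (i : Fin n) → Fin (k i) → ℤ)

def Wext (i : Fin n) (j : ℕ) : ℤ := if h : j < k i then a i ⟨j, h⟩ else 0

def Yext (z : Option ((i : Fin n) × Fin (k i)) → ℚ) (i : Fin n) (j : ℕ) : ℚ :=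
  if h : j < k i then z (some ⟨i, ⟨j, h⟩⟩) else 0

noncomputable def legCF (i : Fin n) (j : ℕ) : ℚ :=
  negCF (Wext k a i j) (List.ofFn fun t : Fin (k i - 1 - j) => Wext k a i (j + 1 + t))

variable (ha : ∀ i j, a i j ≤ -2)

include ha in
lemma legCF_lt (i : Fin n) (j : ℕ) (hj : j < k i) : legCF k a i j < -1 := by
  apply negCF_lt_neg_one
  · rw [Wext, dif_pos hj]; exact ha i _
  · intro b hb
    rw [List.mem_ofFn] at hb
    obtain ⟨t, rfl⟩ := hb
    have ht : j + 1 + (t : ℕ) < k i := by have := t.isLt; omega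
    simp only [Wext, dif_pos ht]
    exact ha i _

include ha in
lemma legCF_ne (i : Fin n) (j : ℕ) (hj : j < k i) : legCF k a i j ≠ 0 := by
  have := legCF_lt k a ha i j hj
  intro h; rw [h] at this; norm_num at this

lemma legCF_rec (i : Fin n) (j : ℕ) (hj : j + 1 < k i) :
    legCF k a i j = (Wext k a i j : ℚ) - 1 / legCF k a i (j + 1) := by
  rw [legCF, ofFn_nat_cons (k i - 1 - j) (by omega) (fun t => Wext k a i (j + 1 + t))]
  rw [ofFn_nat_congr (k i - 1 - j - 1) (k i - 1 - (j + 1)) (by omega)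
    (fun t => Wext k a i (j + 1 + (t + 1))) (fun t => Wext k a i (j + 1 + 1 + t))
    (fun t _ => by rw [show j + 1 + (t + 1) = j + 1 + 1 + t from by omega])]
  rfl

lemma legCF_last (i : Fin n) (j : ℕ) (hj : j + 1 = k i) :
    legCF k a i j = (Wext k a i j : ℚ) := by
  rw [legCF]
  have h0 : k i - 1 - j = 0 := by omega
  have : (List.ofFn fun t : Fin (k i - 1 - j) => Wext k a i (j + 1 + t)) = [] := by
    apply List.eq_nil_of_length_eq_zero
    simp [h0]
  rw [this]
  rfl

end Star


/-- Intersection form of a star-shaped plumbing tree: central vertex of weight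
`e - ∑ ⌊rᵢ⌋`, and `n` legs, the `i`-th leg having `k i` vertices with weights
`a i 0, …, a i (k i - 1)`, all `≤ -2`, coming from the negative continued fraction
expansion of `-1/rᵢ` with `rᵢ ∈ (0,1) ∩ ℚ`.  If the form has determinant zero then it is
negative semi-definite. -/
theorem star_shaped_plumbing_negSemidef
    (n : ℕ) (hn : 1 ≤ n) (k : Fin n → ℕ) (hk : ∀ i, 1 ≤ k i)
    (a : (i : Fin n) → Fin (k i) → ℤ) (ha : ∀ i j, a i j ≤ -2)
    (r : Fin n → ℚ) (hr : ∀ i, 0 < r i ∧ r i < 1)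
    -- the weights along the `i`-th leg form the negative continued fraction of `-1/rᵢ`
    (hcf : ∀ i, negCF (a i ⟨0, hk i⟩)
        (List.ofFn fun t : Fin (k i - 1) => a i ⟨(t : ℕ) + 1, by omega⟩) = -1 / r i)
    (e : ℤ)
    (Q : Matrix (Option ((i : Fin n) × Fin (k i))) (Option ((i : Fin n) × Fin (k i))) ℚ)
    -- diagonal entries: the vertex weights
    (hQcc : Q none none = (e : ℚ) - ∑ i, ⌊r i⌋)
    (hQdiag : ∀ i j, Q (some ⟨i, j⟩) (some ⟨i, j⟩) = a i j)
    -- the central vertex is adjacent exactly to the first vertex of each leg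
    (hQc : ∀ i (j : Fin (k i)),
      Q none (some ⟨i, j⟩) = if (j : ℕ) = 0 then 1 else 0)
    (hQc' : ∀ i (j : Fin (k i)),
      Q (some ⟨i, j⟩) none = if (j : ℕ) = 0 then 1 else 0)
    -- consecutive vertices within a leg are adjacent; no other adjacencies
    (hQlegs : ∀ i (j : Fin (k i)) i' (j' : Fin (k i')),
      (⟨i, j⟩ : (i : Fin n) × Fin (k i)) ≠ ⟨i', j'⟩ →
      Q (some ⟨i, j⟩) (some ⟨i', j'⟩) =
        if i = i' ∧ ((j : ℕ) + 1 = (j' : ℕ) ∨ (j' : ℕ) + 1 = (j : ℕ)) then 1 else 0)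
    (hdet : Q.det = 0) :
    ∀ x : Option ((i : Fin n) × Fin (k i)) → ℚ, dotProduct x (Q.mulVec x) ≤ 0 := by
  classical
  have hr0 : ∀ i, r i ≠ 0 := fun i => ne_of_gt (hr i).1
  have hfloor : ∀ i, ⌊r i⌋ = 0 := fun i =>
    Int.floor_eq_zero_iff.mpr (Set.mem_Ico.mpr ⟨(hr i).1.le, (hr i).2⟩)
  have hQ00 : Q none none = (e : ℚ) := by
    rw [hQcc]; simp [hfloor]
  have hW : ∀ i (j : Fin (k i)), Wext k a i (j : ℕ) = a i j := by
    intro i j; rw [Wext, dif_pos j.isLt]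
  have hYz : ∀ (z : Option ((i : Fin n) × Fin (k i)) → ℚ) i (j : Fin (k i)),
      Yext k z i (j : ℕ) = z (some ⟨i, j⟩) := by
    intro z i j; rw [Yext, dif_pos j.isLt]
  have hYtop : ∀ (z : Option ((i : Fin n) × Fin (k i)) → ℚ) i (j : ℕ), k i ≤ j →
      Yext k z i j = 0 := by
    intro z i j h; rw [Yext, dif_neg (by omega)]
  have hcf' : ∀ i, negCF (Wext k a i 0)
      (List.ofFn fun t : Fin (k i - 1) => Wext k a i ((t : ℕ) + 1)) = -1 / r i := by
    intro i
    have h1 : Wext k a i 0 = a i ⟨0, hk i⟩ := by rw [Wext, dif_pos (show 0 < k i from hk i)]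
    have h2 : (List.ofFn fun t : Fin (k i - 1) => Wext k a i ((t : ℕ) + 1)) =
        (List.ofFn fun t : Fin (k i - 1) => a i ⟨(t : ℕ) + 1, by omega⟩) := by
      congr 1; funext t
      rw [Wext, dif_pos (by have := t.isLt; omega)]
    rw [h1, h2, hcf i]
  have hlc0 : ∀ i, legCF k a i 0 = -1 / r i := by
    intro i
    rw [legCF, ofFn_nat_congr (k i - 1 - 0) (k i - 1) (by omega)
      (fun t => Wext k a i (0 + 1 + t)) (fun t => Wext k a i (t + 1))
      (fun t _ => by rw [show 0 + 1 + t = t + 1 from by omega]), hcf' i]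
  have hrow0 : ∀ (z : Option ((i : Fin n) × Fin (k i)) → ℚ),
      Q.mulVec z none = Q none none * z none + ∑ i, Yext k z i 0 := by
    intro z
    have h1 : Q.mulVec z none = ∑ u : Option ((i : Fin n) × Fin (k i)), Q none u * z u := rfl
    rw [h1, Fintype.sum_option, ← Finset.univ_sigma_univ, Finset.sum_sigma]
    congr 1
    apply Finset.sum_congr rfl
    intro i _
    have hpt : ∀ j : Fin (k i), Q none (some ⟨i, j⟩) * z (some ⟨i, j⟩)
        = if (j : ℕ) = 0 then Yext k z i 0 else 0 := by
      intro j
      rw [hQc]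
      by_cases h0 : (j : ℕ) = 0
      · rw [if_pos h0, if_pos h0, one_mul, ← hYz z i j, h0]
      · rw [if_neg h0, if_neg h0, zero_mul]
    rw [Finset.sum_congr rfl (fun j _ => hpt j), fin_sum_ite, if_pos (show 0 < k i from hk i)]
  have hrow : ∀ (z : Option ((i : Fin n) × Fin (k i)) → ℚ) (i : Fin n) (j : Fin (k i)),
      Q.mulVec z (some ⟨i, j⟩) =
        (if (j : ℕ) = 0 then z none else Yext k z i ((j : ℕ) - 1))
          + (a i j : ℚ) * Yext k z i (j : ℕ) + Yext k z i ((j : ℕ) + 1) := by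
    intro z i j
    have h1 : Q.mulVec z (some ⟨i, j⟩)
        = ∑ u : Option ((i : Fin n) × Fin (k i)), Q (some ⟨i, j⟩) u * z u := rfl
    rw [h1, Fintype.sum_option, ← Finset.univ_sigma_univ, Finset.sum_sigma, hQc' i j]
    have houter : ∑ i' : Fin n, ∑ j' : Fin (k i'),
          Q (some ⟨i, j⟩) (some ⟨i', j'⟩) * z (some ⟨i', j'⟩)
        = ∑ j' : Fin (k i), Q (some ⟨i, j⟩) (some ⟨i, j'⟩) * z (some ⟨i, j'⟩) := by
      apply Finset.sum_eq_single_of_mem i (Finset.mem_univ i)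
      intro i' _ hne
      apply Finset.sum_eq_zero
      intro j' _
      rw [hQlegs i j i' j' (fun h => hne (congrArg Sigma.fst h).symm),
        if_neg (fun h => hne h.1.symm), zero_mul]
    rw [houter]
    have hpt : ∀ j' : Fin (k i), Q (some ⟨i, j⟩) (some ⟨i, j'⟩) * z (some ⟨i, j'⟩)
        = (if (j' : ℕ) = (j : ℕ) then (a i j : ℚ) * Yext k z i (j : ℕ) else 0)
          + (if (j' : ℕ) = (j : ℕ) + 1 then Yext k z i ((j : ℕ) + 1) else 0)
          + (if (j : ℕ) = 0 then 0
              else if (j' : ℕ) = (j : ℕ) - 1 then Yext k z i ((j : ℕ) - 1) else 0) := by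
      intro j'
      rcases eq_or_ne j' j with rfl | hne
      · rw [hQdiag, hYz]
        by_cases h0 : (j' : ℕ) = 0
        · rw [if_pos rfl, if_neg (by omega), if_pos h0]; ring
        · rw [if_pos rfl, if_neg (by omega), if_neg h0, if_neg (by omega)]; ring
      · have hne' : (⟨i, j⟩ : (i : Fin n) × Fin (k i)) ≠ ⟨i, j'⟩ := by
          intro h
          exact hne (eq_of_heq (Sigma.mk.inj_iff.mp h).2).symm
        rw [hQlegs i j i j' hne']
        by_cases hA : (j : ℕ) + 1 = (j' : ℕ)
        · rw [if_pos ⟨rfl, Or.inl hA⟩, one_mul,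
            if_neg (by omega), if_pos hA.symm]
          have h3 : (if (j : ℕ) = 0 then (0:ℚ)
              else if (j' : ℕ) = (j : ℕ) - 1 then Yext k z i ((j : ℕ) - 1) else 0) = 0 := by
            by_cases h0 : (j : ℕ) = 0
            · rw [if_pos h0]
            · rw [if_neg h0, if_neg (by omega)]
          rw [h3, show (j : ℕ) + 1 = (j' : ℕ) from hA, hYz]
          ring
        · by_cases hB : (j' : ℕ) + 1 = (j : ℕ)
          · rw [if_pos ⟨rfl, Or.inr hB⟩, one_mul,
              if_neg (by omega), if_neg (by omega), if_neg (by omega),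
              if_pos (by omega : (j' : ℕ) = (j : ℕ) - 1),
              show (j : ℕ) - 1 = (j' : ℕ) from by omega, hYz]
            ring
          · rw [if_neg (by rintro ⟨-, h | h⟩; exact hA h; exact hB h), zero_mul,
              if_neg (fun h => hne (Fin.ext h)), if_neg (by omega)]
            have h3 : (if (j : ℕ) = 0 then (0:ℚ)
                else if (j' : ℕ) = (j : ℕ) - 1 then Yext k z i ((j : ℕ) - 1) else 0) = 0 := by
              by_cases h0 : (j : ℕ) = 0
              · rw [if_pos h0]
              · rw [if_neg h0, if_neg (by omega)]
            rw [h3]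
            ring
    rw [Finset.sum_congr rfl (fun j' _ => hpt j'), Finset.sum_add_distrib,
      Finset.sum_add_distrib, fin_sum_ite, fin_sum_ite,
      if_pos j.isLt]
    have h4 : (if (j : ℕ) + 1 < k i then Yext k z i ((j : ℕ) + 1) else 0)
        = Yext k z i ((j : ℕ) + 1) := by
      by_cases h : (j : ℕ) + 1 < k i
      · rw [if_pos h]
      · rw [if_neg h, hYtop z i _ (by omega)]
    rw [h4]
    have h5 : (∑ j' : Fin (k i), if (j : ℕ) = 0 then (0:ℚ)
        else if (j' : ℕ) = (j : ℕ) - 1 then Yext k z i ((j : ℕ) - 1) else 0)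
        = if (j : ℕ) = 0 then 0 else Yext k z i ((j : ℕ) - 1) := by
      by_cases h0 : (j : ℕ) = 0
      · simp [h0]
      · simp only [if_neg h0]
        rw [fin_sum_ite, if_pos (by have := j.isLt; omega)]
    rw [h5]
    by_cases h0 : (j : ℕ) = 0
    · rw [if_pos h0, if_pos h0, if_pos h0]; ring
    · rw [if_neg h0, if_neg h0, if_neg h0]; ring
  have hS : ∀ (z : Option ((i : Fin n) × Fin (k i)) → ℚ),
      dotProduct z (Q.mulVec z) = Q none none * z none ^ 2 +
        ∑ i, chainF (z none) (List.ofFn fun t : Fin (k i) => Wext k a i (t : ℕ))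
          (List.ofFn fun t : Fin (k i) => Yext k z i (t : ℕ)) := by
    intro z
    have h1 : dotProduct z (Q.mulVec z)
        = ∑ u : Option ((i : Fin n) × Fin (k i)), z u * Q.mulVec z u := rfl
    rw [h1, Fintype.sum_option, hrow0, ← Finset.univ_sigma_univ, Finset.sum_sigma]
    have hlegsum : ∀ i, ∑ j : Fin (k i), z (some ⟨i, j⟩) * Q.mulVec z (some ⟨i, j⟩)
        = chainF (z none) (List.ofFn fun t : Fin (k i) => Wext k a i (t : ℕ))
            (List.ofFn fun t : Fin (k i) => Yext k z i (t : ℕ))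
          - z none * Yext k z i 0 := by
      intro i
      rw [chainF_formula (k i) (fun t => Wext k a i t) (fun t => Yext k z i t) (z none)]
      have hconv : ∀ j : Fin (k i), z (some ⟨i, j⟩) * Q.mulVec z (some ⟨i, j⟩) =
          (fun t : ℕ => Yext k z i t * ((if t = 0 then z none else Yext k z i (t - 1))
            + (Wext k a i t : ℚ) * Yext k z i t + Yext k z i (t + 1))) ((j : ℕ)) := by
        intro j
        simp only []
        rw [hrow z i j, hYz, hW]
      rw [Finset.sum_congr rfl (fun j _ => hconv j),
        Fin.sum_univ_eq_sum_range (fun t : ℕ => Yext k z i t *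
          ((if t = 0 then z none else Yext k z i (t - 1))
            + (Wext k a i t : ℚ) * Yext k z i t + Yext k z i (t + 1))) (k i)]
      have hshift := sum_shift (k i) (fun t => Yext k z i t) (hYtop z i (k i) le_rfl)
      have hsplit : ∀ t : ℕ, Yext k z i t * ((if t = 0 then z none else Yext k z i (t - 1))
            + (Wext k a i t : ℚ) * Yext k z i t + Yext k z i (t + 1))
          = ((Wext k a i t : ℚ) * Yext k z i t ^ 2
              + Yext k z i t * (if t = 0 then z none else Yext k z i (t - 1)))
            + Yext k z i t * Yext k z i (t + 1) := by
        intro t; ring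
      rw [Finset.sum_congr rfl (fun t _ => hsplit t), Finset.sum_add_distrib, hshift]
      rw [← Finset.sum_add_distrib]
      have hfin : ∀ t ∈ Finset.range (k i),
          ((Wext k a i t : ℚ) * Yext k z i t ^ 2
              + Yext k z i t * (if t = 0 then z none else Yext k z i (t - 1)))
            + (if t = 0 then 0 else Yext k z i (t - 1)) * Yext k z i t
          = ((Wext k a i t : ℚ) * Yext k z i t ^ 2
              + 2 * (if t = 0 then z none else Yext k z i (t - 1)) * Yext k z i t)
            - (if t = 0 then z none * Yext k z i 0 else 0) := by
        intro t _
        by_cases h0 : t = 0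
        · subst h0; simp only [reduceIte]; ring
        · simp only [if_neg h0]; ring
      rw [Finset.sum_congr rfl hfin, Finset.sum_sub_distrib]
      rw [Finset.sum_ite_eq' (Finset.range (k i)) 0 (fun _ => z none * Yext k z i 0),
        if_pos (Finset.mem_range.mpr (show 0 < k i from hk i))]
    rw [Finset.sum_congr rfl (fun i _ => hlegsum i), Finset.sum_sub_distrib,
      ← Finset.mul_sum]
    ring
  have hchain_le : ∀ (z : Option ((i : Fin n) × Fin (k i)) → ℚ) i,
      chainF (z none) (List.ofFn fun t : Fin (k i) => Wext k a i (t : ℕ))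
          (List.ofFn fun t : Fin (k i) => Yext k z i (t : ℕ))
        ≤ r i * z none ^ 2 := by
    intro z i
    rw [ofFn_nat_cons (k i) (hk i) (fun t => Wext k a i t)]
    have hmem : ∀ b ∈ (List.ofFn fun t : Fin (k i - 1) => Wext k a i ((t : ℕ) + 1)), b ≤ -2 := by
      intro b hb
      rw [List.mem_ofFn] at hb
      obtain ⟨t, rfl⟩ := hb
      have ht : (t : ℕ) + 1 < k i := by have := t.isLt; omega
      simp only [Wext, dif_pos ht]
      exact ha i _
    have hhead : Wext k a i 0 ≤ -2 := by
      rw [Wext, dif_pos (show 0 < k i from hk i)]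
      exact ha i _
    have hle := chainF_le (List.ofFn fun t : Fin (k i - 1) => Wext k a i ((t : ℕ) + 1))
      (Wext k a i 0) hhead hmem (z none)
      (List.ofFn fun t : Fin (k i) => Yext k z i (t : ℕ))
    rw [hcf' i] at hle
    have heq : -z none ^ 2 / (-1 / r i) = r i * z none ^ 2 := by
      field_simp
    linarith
  have heps : (e : ℚ) + ∑ i, r i = 0 := by
    by_contra hne
    obtain ⟨v, hvne, hv⟩ := Matrix.exists_mulVec_eq_zero_iff.mpr hdet
    have hlegrel : ∀ i (d : ℕ) (j : ℕ) (hj : j < k i), k i = j + 1 + d →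
        legCF k a i j * Yext k v i j
          + (if j = 0 then v none else Yext k v i (j - 1)) = 0 := by
      intro i d
      induction d with
      | zero =>
        intro j hj hkd
        have h0 := congrFun hv (some ⟨i, ⟨j, hj⟩⟩)
        rw [hrow v i ⟨j, hj⟩] at h0
        simp only [Pi.zero_apply] at h0
        rw [legCF_last k a i j (by omega)]
        rw [hW i ⟨j, hj⟩]
        rw [hYtop v i (j + 1) (by omega)] at h0
        push_cast at h0 ⊢
        linarith
      | succ d ih =>
        intro j hj hkd
        have hj1 : j + 1 < k i := by omega
        have hih := ih (j + 1) hj1 (by omega)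
        rw [if_neg (by omega), Nat.add_sub_cancel] at hih
        have h0 := congrFun hv (some ⟨i, ⟨j, hj⟩⟩)
        rw [hrow v i ⟨j, hj⟩] at h0
        simp only [Pi.zero_apply] at h0
        have hcne : legCF k a i (j + 1) ≠ 0 := legCF_ne k a ha i (j + 1) hj1
        rw [legCF_rec k a i j hj1, hW i ⟨j, hj⟩]
        have hinv : (1 / legCF k a i (j + 1)) * Yext k v i j = -Yext k v i (j + 1) := by
          field_simp
          linarith
        have hexp : ((a i ⟨j, hj⟩ : ℚ) - 1 / legCF k a i (j + 1)) * Yext k v i j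
            = (a i ⟨j, hj⟩ : ℚ) * Yext k v i j
              - (1 / legCF k a i (j + 1)) * Yext k v i j := by ring
        rw [hexp, hinv]
        linarith
    have hY0 : ∀ i, Yext k v i 0 = r i * v none := by
      intro i
      have h := hlegrel i (k i - 1) 0 (hk i) (by have := hk i; omega)
      rw [hlc0 i, if_pos rfl] at h
      have hrne := hr0 i
      field_simp at h
      linarith
    have hc0 := congrFun hv none
    rw [hrow0 v, hQ00] at hc0
    simp only [Pi.zero_apply] at hc0
    rw [Finset.sum_congr rfl (fun i (_ : i ∈ Finset.univ) => hY0 i), ← Finset.sum_mul] at hc0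
    have hv0 : v none = 0 := by
      have hfac : ((e : ℚ) + ∑ i, r i) * v none = 0 := by linarith
      exact (mul_eq_zero.mp hfac).resolve_left hne
    have hallz : ∀ i (j : ℕ), j < k i → Yext k v i j = 0 := by
      intro i j
      induction j with
      | zero => intro _; rw [hY0 i, hv0, mul_zero]
      | succ j ihj =>
        intro h
        have hrel := hlegrel i (k i - (j + 1) - 1) (j + 1) h (by omega)
        rw [if_neg (by omega), Nat.add_sub_cancel, ihj (by omega), add_zero] at hrel
        exact (mul_eq_zero.mp hrel).resolve_left (legCF_ne k a ha i (j + 1) h)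
    apply hvne
    funext u
    cases u with
    | none => exact hv0
    | some s =>
      show v (some s) = 0
      obtain ⟨i, j⟩ := s
      rw [← hYz v i j]
      exact hallz i (j : ℕ) j.isLt
  intro x
  rw [hS x, hQ00]
  have hsum : ∑ i, chainF (x none) (List.ofFn fun t : Fin (k i) => Wext k a i (t : ℕ))
        (List.ofFn fun t : Fin (k i) => Yext k x i (t : ℕ))
      ≤ ∑ i, r i * x none ^ 2 :=
    Finset.sum_le_sum (fun i _ => hchain_le x i)
  have hzero : (e : ℚ) * x none ^ 2 + ∑ i, r i * x none ^ 2 = 0 := by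
    rw [← Finset.sum_mul]
    have : ((e : ℚ) + ∑ i, r i) * x none ^ 2 = 0 := by rw [heps, zero_mul]
    linarith [this]
  linarith
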